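/- Suppose a random tournament on n alternatives a_1,...,a_n is generated with independent edges where, for all i > j, the probability of the edge a_i → a_j is exactly c/n for a constant c ≥ 0 (and hence a_i → a_j for i < j with probability 1 − c/n). Then the probability that the tournament has a Condorcet winner equals (1 − c/n)^{n−1} · Σ_{i=0}^{n−1} (c/(n−c))^i, and this converges to e^{−c} as n → ∞. -/

import Mathlib

/-- The set of (unordered) edges of a tournament on `n` alternatives, represented by the
ordered pairs `(i, j)` with `i < j`. -/
abbrev Edges (n : ℕ) := {q : Fin n × Fin n // q.1 < q.2}

/-- An orientation of all edges: `σ e = true` means the edge `e = (i, j)` (with `i < j`)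
is oriented from `a_i` to `a_j`. A tournament is exactly such an orientation. -/
abbrev Orient (n : ℕ) := Edges n → Bool

/-- `a_i` dominates `a_j` in the tournament given by the orientation `σ`. -/
def beats {n : ℕ} (σ : Orient n) (i j : Fin n) : Prop :=
  (∃ h : i < j, σ ⟨(i, j), h⟩ = true) ∨ (∃ h : j < i, σ ⟨(j, i), h⟩ = false)

/-- The probability of obtaining the particular tournament `σ` when each edge `(i, j)`
(`i < j`) is independently oriented from `a_i` to `a_j` with probability `p i j`. -/
noncomputable def prOf {n : ℕ} (p : Fin n → Fin n → ℝ) (σ : Orient n) : ℝ :=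
  ∏ e : Edges n, if σ e = true then p e.1.1 e.1.2 else 1 - p e.1.1 e.1.2

/-- The probability of the event `E` under the independent-edge random tournament model
with edge probabilities `p`. -/
noncomputable def Pr {n : ℕ} (p : Fin n → Fin n → ℝ) (E : Set (Orient n)) : ℝ :=
  ∑ σ : Orient n, E.indicator (prOf p) σ

/-- if every edge `a_i → a_j` with `i < j` appears with probability exactly
`1 - c/n` (so each "upset" edge appears with probability `c/n`), `0 ≤ c < n`, then the
probability that the tournament has a Condorcet winner equals
`(1 - c/n)^(n-1) · Σ_{i=0}^{n-1} (c/(n-c))^i`, and this converges to `e^(-c)`. -/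
private lemma sum_prod_bool {α : Type*} [Fintype α] [DecidableEq α] (W : α → Bool → ℝ) :
    ∑ σ : α → Bool, ∏ a, W a (σ a) = ∏ a, (W a true + W a false) := by
  have h : ∀ a : α, W a true + W a false = ∑ b : Bool, W a b := by
    intro a; simp
  simp_rw [h]
  rw [Finset.prod_univ_sum, ← Fintype.piFinset_univ]

private lemma winner_iff {n : ℕ} (σ : Orient n) (i : Fin n) :
    (∀ j, j ≠ i → beats σ i j) ↔
    ∀ e : Edges n, (e.1.1 = i → σ e = true) ∧ (e.1.2 = i → σ e = false) := by
  constructor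
  · intro h e
    obtain ⟨⟨a, b⟩, hab⟩ := e
    constructor
    · rintro rfl
      have hb : b ≠ a := fun hb => absurd hab (by rw [hb]; exact lt_irrefl _)
      rcases h b hb with ⟨h', hs⟩ | ⟨h', hs⟩
      · exact hs
      · exact absurd hab (lt_asymm h')
    · rintro rfl
      have ha : a ≠ b := ne_of_lt hab
      rcases h a ha with ⟨h', hs⟩ | ⟨h', hs⟩
      · exact absurd hab (lt_asymm h')
      · exact hs
  · intro h j hj
    rcases lt_or_gt_of_ne (Ne.symm hj) with hij | hij
    · exact Or.inl ⟨hij, (h ⟨(i, j), hij⟩).1 rfl⟩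
    · exact Or.inr ⟨hij, (h ⟨(j, i), hij⟩).2 rfl⟩

private lemma winner_unique {n : ℕ} {σ : Orient n} {i j : Fin n}
    (hi : ∀ k, k ≠ i → beats σ i k) (hj : ∀ k, k ≠ j → beats σ j k) : i = j := by
  by_contra h
  have h1 := hi j (fun e => h e.symm)
  have h2 := hj i h
  rcases h1 with ⟨ha, hs⟩ | ⟨ha, hs⟩ <;> rcases h2 with ⟨hb, ht⟩ | ⟨hb, ht⟩
  · exact absurd hb (lt_asymm ha)
  · rw [hs] at ht; exact Bool.noConfusion ht
  · rw [hs] at ht; exact Bool.noConfusion ht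
  · exact absurd hb (lt_asymm ha)

private lemma cardFst {n : ℕ} (i : Fin n) :
    (Finset.univ.filter fun e : Edges n => e.1.1 = i).card = n - 1 - i.val := by
  rw [← Fin.card_Ioi i]
  refine Finset.card_bij' (fun e _ => e.1.2) (fun j hj => ⟨(i, j), Finset.mem_Ioi.mp hj⟩)
    ?_ ?_ ?_ ?_
  · intro e he
    have := (Finset.mem_filter.mp he).2
    exact Finset.mem_Ioi.mpr (this ▸ e.2)
  · intro j hj; simp
  · intro e he
    have h1 := (Finset.mem_filter.mp he).2
    ext <;> simp [h1.symm]
  · intro j hj; rfl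

private lemma cardSnd {n : ℕ} (i : Fin n) :
    (Finset.univ.filter fun e : Edges n => e.1.2 = i).card = i.val := by
  rw [← Fin.card_Iio i]
  refine Finset.card_bij' (fun e _ => e.1.1) (fun j hj => ⟨(j, i), Finset.mem_Iio.mp hj⟩)
    ?_ ?_ ?_ ?_
  · intro e he
    have := (Finset.mem_filter.mp he).2
    exact Finset.mem_Iio.mpr (this ▸ e.2)
  · intro j hj; simp
  · intro e he
    have h1 := (Finset.mem_filter.mp he).2
    ext <;> simp [h1.symm]
  · intro j hj; rfl

private lemma part1 (c : ℝ) (hc : 0 ≤ c) (n : ℕ) (hn : c < n) :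
      Pr (fun _ _ : Fin n => 1 - c / n)
          {σ : Orient n | ∃ i : Fin n, ∀ j : Fin n, j ≠ i → beats σ i j}
        = (1 - c / n) ^ (n - 1) * ∑ i ∈ Finset.range n, (c / ((n : ℝ) - c)) ^ i := by
  classical
  have hn0 : (0:ℝ) < n := lt_of_le_of_lt hc hn
  have hnne : (n:ℝ) ≠ 0 := ne_of_gt hn0
  have hp : (0:ℝ) < 1 - c / n := by rw [sub_pos, div_lt_one hn0]; exact hn
  have hpne : (1 - c/(n:ℝ)) ≠ 0 := ne_of_gt hp
  set A : Fin n → Set (Orient n) := fun i => {σ | ∀ j, j ≠ i → beats σ i j} with hA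
  set W : Fin n → Edges n → Bool → ℝ := fun i e b =>
    if e.1.1 = i then (if b then 1 - c/n else 0)
    else if e.1.2 = i then (if b then 0 else c/n)
    else (if b then 1 - c/n else c/n) with hW
  set p : Fin n → Fin n → ℝ := fun _ _ => 1 - c/(n:ℝ) with hpdef
  have hPrA : ∀ i : Fin n,
      (∑ σ : Orient n, (A i).indicator (prOf p) σ)
        = (1 - c/(n:ℝ)) ^ (n - 1 - i.val) * (c/(n:ℝ)) ^ i.val := by
    intro i
    have step2 : ∀ σ : Orient n,
        (A i).indicator (prOf p) σ = ∏ e, W i e (σ e) := by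
      intro σ
      by_cases hσ : σ ∈ A i
      · rw [Set.indicator_of_mem hσ, prOf]
        refine Finset.prod_congr rfl (fun e _ => ?_)
        obtain ⟨h1, h2⟩ := (winner_iff σ i).mp hσ e
        simp only [hW, hpdef]
        by_cases hf : e.1.1 = i
        · rw [h1 hf]; simp [hf]
        · by_cases hs : e.1.2 = i
          · rw [h2 hs]; simp [hf, hs] <;> ring_nf
          · simp only [hf, hs, if_false]
            cases σ e <;> simp [hf, hs] <;> ring_nf
      · rw [Set.indicator_of_notMem hσ]
        have hσ' : ¬ ∀ e : Edges n, (e.1.1 = i → σ e = true) ∧ (e.1.2 = i → σ e = false) :=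
          fun hcon => hσ ((winner_iff σ i).mpr hcon)
        obtain ⟨e, he⟩ := not_forall.mp hσ'
        symm
        apply Finset.prod_eq_zero (Finset.mem_univ e)
        by_cases hf : e.1.1 = i
        · have h2 : e.1.2 = i → σ e = false := by
            intro h
            have hlt := e.2
            rw [hf, h] at hlt
            exact absurd hlt (lt_irrefl i)
          have h1 : ¬ (σ e = true) := fun h => he ⟨fun _ => h, h2⟩
          have hfalse : σ e = false := by simpa using h1
          simp [hW, hf, hfalse]
        · by_cases hs : e.1.2 = i
          · have h1 : e.1.1 = i → σ e = true := fun h => (hf h).elim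
            have h2 : σ e = true := by
              by_contra h
              exact he ⟨h1, fun _ => by simpa using h⟩
            simp [hW, hf, hs, h2]
          · exact absurd ⟨fun h => (hf h).elim, fun h => (hs h).elim⟩ he
    calc ∑ σ : Orient n, (A i).indicator (prOf p) σ
        = ∑ σ : Orient n, ∏ e, W i e (σ e) :=
          Finset.sum_congr rfl (fun σ _ => step2 σ)
      _ = ∏ e : Edges n, (W i e true + W i e false) := sum_prod_bool _
      _ = ∏ e : Edges n,
            ((if e.1.1 = i then 1 - c/(n:ℝ) else 1) * (if e.1.2 = i then c/(n:ℝ) else 1)) := by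
          refine Finset.prod_congr rfl fun e _ => ?_
          by_cases hf : e.1.1 = i
          · have hs : ¬ e.1.2 = i := by
              intro h
              have hlt := e.2
              rw [hf, h] at hlt
              exact absurd hlt (lt_irrefl i)
            simp [hW, hf, hs]
          · by_cases hs : e.1.2 = i
            · simp [hW, hf, hs]
            · simp [hW, hf, hs]
      _ = (1 - c/(n:ℝ)) ^ (n - 1 - i.val) * (c/(n:ℝ)) ^ i.val := by
          rw [Finset.prod_mul_distrib]
          have key : ∀ (P : Edges n → Prop) [DecidablePred P] (a : ℝ),
              ∏ e : Edges n, (if P e then a else 1) = a ^ (Finset.univ.filter P).card := by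
            intro P _ a
            rw [Finset.prod_ite, Finset.prod_const, Finset.prod_const_one, mul_one]
          rw [key _ (1 - c/(n:ℝ)), key _ (c/(n:ℝ)), cardFst, cardSnd]
  have hdec : ∀ σ : Orient n,
      ({σ : Orient n | ∃ i : Fin n, ∀ j : Fin n, j ≠ i → beats σ i j}).indicator (prOf p) σ
        = ∑ i : Fin n, (A i).indicator (prOf p) σ := by
    intro σ
    by_cases hσ : ∃ i : Fin n, ∀ j, j ≠ i → beats σ i j
    · obtain ⟨i, hi⟩ := hσ
      rw [Set.indicator_of_mem
        (show σ ∈ {σ : Orient n | ∃ i : Fin n, ∀ j : Fin n, j ≠ i → beats σ i j} from ⟨i, hi⟩)]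
      rw [Finset.sum_eq_single i]
      · exact (Set.indicator_of_mem (show σ ∈ A i from hi) _).symm
      · intro j _ hji
        apply Set.indicator_of_notMem
        intro hj
        exact hji (winner_unique hj hi)
      · intro h; exact absurd (Finset.mem_univ i) h
    · rw [Set.indicator_of_notMem
        (show σ ∉ {σ : Orient n | ∃ i : Fin n, ∀ j : Fin n, j ≠ i → beats σ i j} from hσ)]
      symm; apply Finset.sum_eq_zero
      intro i _
      apply Set.indicator_of_notMem
      intro hi; exact hσ ⟨i, hi⟩
  have hnc : (n:ℝ) - c ≠ 0 := ne_of_gt (sub_pos.mpr hn)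
  calc Pr p {σ : Orient n | ∃ i : Fin n, ∀ j : Fin n, j ≠ i → beats σ i j}
      = ∑ σ : Orient n, ∑ i : Fin n, (A i).indicator (prOf p) σ := by
        rw [Pr]; exact Finset.sum_congr rfl (fun σ _ => hdec σ)
    _ = ∑ i : Fin n, ∑ σ : Orient n, (A i).indicator (prOf p) σ := Finset.sum_comm
    _ = ∑ i : Fin n, (1 - c/(n:ℝ)) ^ (n - 1 - i.val) * (c/(n:ℝ)) ^ i.val :=
        Finset.sum_congr rfl (fun i _ => hPrA i)
    _ = ∑ k ∈ Finset.range n, (1 - c/(n:ℝ)) ^ (n - 1 - k) * (c/(n:ℝ)) ^ k :=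
        Fin.sum_univ_eq_sum_range (fun k => (1 - c/(n:ℝ)) ^ (n - 1 - k) * (c/(n:ℝ)) ^ k) n
    _ = (1 - c / n) ^ (n - 1) * ∑ i ∈ Finset.range n, (c / ((n : ℝ) - c)) ^ i := by
        rw [Finset.mul_sum]
        refine Finset.sum_congr rfl fun k hk => ?_
        have hk' : k ≤ n - 1 := by
          have := Finset.mem_range.mp hk; omega
        have hkey : c / ((n:ℝ) - c) = (c/(n:ℝ)) / (1 - c/(n:ℝ)) := by
          field_simp
        have hpow : (1 - c/(n:ℝ))^(n-1) = (1 - c/(n:ℝ))^(n-1-k) * (1 - c/(n:ℝ))^k := by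
          rw [← pow_add]; congr 1; omega
        have hAk : (1 - c/(n:ℝ))^k ≠ 0 := pow_ne_zero _ hpne
        rw [hkey, hpow]
        rw [mul_assoc, ← mul_pow, mul_div_assoc', mul_div_cancel_left₀ _ hpne]

open Filter Real in
private lemma part2 (c : ℝ) (hc : 0 ≤ c) :
    Filter.Tendsto
      (fun n : ℕ => (1 - c / n) ^ (n - 1) * ∑ i ∈ Finset.range n, (c / ((n : ℝ) - c)) ^ i)
      Filter.atTop (nhds (Real.exp (-c))) := by
  have h1 : Tendsto (fun n : ℕ => (1 - c/(n:ℝ))^(n-1)) atTop (nhds (Real.exp (-c))) := by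
    have hbase : Tendsto (fun n : ℕ => 1 - c/(n:ℝ)) atTop (nhds 1) := by
      have h := (tendsto_const_nhds (x := (1:ℝ)) (f := atTop (α := ℕ))).sub
        (tendsto_const_div_atTop_nhds_zero_nat c)
      simpa using h
    have hpow : Tendsto (fun n : ℕ => (1 - c/(n:ℝ))^n) atTop (nhds (Real.exp (-c))) := by
      have := Real.tendsto_one_add_div_pow_exp (-c)
      apply this.congr
      intro n
      rw [neg_div, ← sub_eq_add_neg]
    have hinv : Tendsto (fun n : ℕ => (1 - c/(n:ℝ))⁻¹) atTop (nhds 1) := by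
      have := hbase.inv₀ (by norm_num)
      simpa using this
    have hmul := hpow.mul hinv
    rw [mul_one] at hmul
    apply hmul.congr'
    filter_upwards [Filter.eventually_ge_atTop (⌈c⌉₊ + 1)] with n hn
    have hn1 : 1 ≤ n := le_trans (Nat.le_add_left 1 _) hn
    have hcn : c < (n:ℝ) := by
      have h1 := Nat.le_ceil c
      have h2 : ((⌈c⌉₊ + 1 : ℕ) : ℝ) ≤ (n:ℝ) := by exact_mod_cast hn
      push_cast at h2
      linarith
    have hn0 : (0:ℝ) < n := lt_of_le_of_lt hc hcn
    have hne : (1 - c/(n:ℝ)) ≠ 0 := by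
      have : c/(n:ℝ) < 1 := (div_lt_one hn0).mpr hcn
      linarith
    have hsucc : n - 1 + 1 = n := Nat.succ_pred_eq_of_pos hn1
    have hps : (1 - c/(n:ℝ))^n = (1 - c/(n:ℝ))^(n-1) * (1 - c/(n:ℝ)) := by
      rw [← pow_succ, hsucc]
    rw [hps, mul_assoc, mul_inv_cancel₀ hne, mul_one]
  have hhalf : ∀ᶠ n : ℕ in atTop, 0 ≤ c/((n:ℝ)-c) ∧ c/((n:ℝ)-c) ≤ 1/2 := by
    filter_upwards [Filter.eventually_ge_atTop (⌈3*c⌉₊ + 1)] with n hn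
    have h3c : 3*c + 1 ≤ (n:ℝ) := by
      have h1 := Nat.le_ceil (3*c)
      have h2 : ((⌈3*c⌉₊ + 1 : ℕ) : ℝ) ≤ (n:ℝ) := by exact_mod_cast hn
      push_cast at h2
      linarith
    have hpos : 0 < (n:ℝ) - c := by linarith
    constructor
    · positivity
    · rw [div_le_iff₀ hpos]; linarith
  have h2 : Tendsto (fun n : ℕ => ∑ i ∈ Finset.range n, (c/((n:ℝ)-c))^i) atTop (nhds 1) := by
    have hr : Tendsto (fun n : ℕ => c/((n:ℝ)-c)) atTop (nhds 0) := by
      apply Tendsto.div_atTop (tendsto_const_nhds (x := c))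
      apply Tendsto.congr (f₁ := fun n : ℕ => (n:ℝ) + (-c))
      · intro n; ring
      · exact tendsto_atTop_add_const_right _ (-c) tendsto_natCast_atTop_atTop
    have hrn : Tendsto (fun n : ℕ => (c/((n:ℝ)-c))^n) atTop (nhds 0) := by
      apply squeeze_zero' (hhalf.mono fun n h => pow_nonneg h.1 n)
        (g := fun n : ℕ => (1/2:ℝ)^n)
        (hhalf.mono fun n h => pow_le_pow_left₀ h.1 h.2 n)
      exact tendsto_pow_atTop_nhds_zero_of_lt_one (by norm_num) (by norm_num)
    have hdiv : Tendsto (fun n : ℕ => ((c/((n:ℝ)-c))^n - 1)/((c/((n:ℝ)-c)) - 1)) atTop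
        (nhds 1) := by
      have h := (hrn.sub (tendsto_const_nhds (x := (1:ℝ)))).div
        (hr.sub (tendsto_const_nhds (x := (1:ℝ)))) (by norm_num)
      have h' : ((0:ℝ) - 1) / (0 - 1) = 1 := by norm_num
      rw [h'] at h
      exact h
    apply hdiv.congr'
    filter_upwards [hhalf] with n h
    rw [geom_sum_eq (ne_of_lt (lt_of_le_of_lt h.2 (by norm_num)))]
  have := h1.mul h2
  simpa using this

theorem stmt11 (c : ℝ) (hc : 0 ≤ c) :
    (∀ n : ℕ, c < n →
      Pr (fun _ _ : Fin n => 1 - c / n)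
          {σ : Orient n | ∃ i : Fin n, ∀ j : Fin n, j ≠ i → beats σ i j}
        = (1 - c / n) ^ (n - 1) * ∑ i ∈ Finset.range n, (c / ((n : ℝ) - c)) ^ i) ∧
    Filter.Tendsto
      (fun n : ℕ => (1 - c / n) ^ (n - 1) * ∑ i ∈ Finset.range n, (c / ((n : ℝ) - c)) ^ i)
      Filter.atTop (nhds (Real.exp (-c))) := by
  exact ⟨fun n hn => part1 c hc n hn, part2 c hc⟩
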